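/- Let D be an integral domain and S a torsion-free cancellative additive commutative monoid. If the monoid domain D[S] satisfies ACCP, then D satisfies ACCP and S satisfies ACCP (every ascending chain of principal monoid ideals s + S of S stabilizes). -/

import Mathlib

/-- A commutative ring satisfies ACCP if every ascending chain of principal ideals
stabilizes. -/
def SatisfiesACCP (R : Type*) [CommRing R] : Prop :=
  ∀ I : ℕ → Ideal R, (∀ k, (I k).IsPrincipal) → (∀ k, I k ≤ I (k + 1)) →
    ∃ N, ∀ k, N ≤ k → I k = I N

/-- Let `D` be an integral domain and `S` a torsion-free cancellative additive commutative
monoid. If the monoid domain `D[S]` satisfies ACCP, then `D` satisfies ACCP and `S` satisfies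
ACCP: every ascending chain of principal monoid ideals `s + S` stabilizes. -/
theorem accp_of_monoidAlgebra_accp {D : Type*} [CommRing D] [IsDomain D]
    (S : Type*) [AddCancelCommMonoid S]
    (htf : ∀ (k : ℕ) (s t : S), 0 < k → k • s = k • t → s = t)
    (h : SatisfiesACCP (AddMonoidAlgebra D S)) :
    SatisfiesACCP D ∧
      ∀ s : ℕ → S, (∀ k, ∃ d, s k = s (k + 1) + d) →
        ∃ N, ∀ k, N ≤ k →
          {x : S | ∃ d, x = s k + d} = {x : S | ∃ d, x = s N + d} := by
  classical
  constructor
  · -- D satisfies ACCP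
    intro I hP hC
    choose a ha using fun k => (hP k).principal
    simp only [Ideal.submodule_span_eq] at ha
    -- augmentation map
    let ε : AddMonoidAlgebra D S →ₐ[D] D := AddMonoidAlgebra.lift D D S 1
    have hε : ∀ x : D, ε (AddMonoidAlgebra.single 0 x) = x := by
      intro x
      simp [ε, AddMonoidAlgebra.lift_single]
    set C : D →+* AddMonoidAlgebra D S := AddMonoidAlgebra.singleZeroRingHom with hCdef
    have hdvd : ∀ k, a (k+1) ∣ a k := by
      intro k
      have : a k ∈ I (k+1) := hC k (by rw [ha k]; exact Ideal.mem_span_singleton_self _)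
      rw [ha (k+1), Ideal.mem_span_singleton] at this
      exact this
    obtain ⟨N, hN⟩ := h (fun k => Ideal.span {C (a k)}) (fun k => ⟨⟨_, rfl⟩⟩)
      (fun k => (Ideal.span_singleton_le_span_singleton).2 (map_dvd C (hdvd k)))
    refine ⟨N, fun k hk => ?_⟩
    have h1 : C (a N) ∣ C (a k) := by
      have := (hN k hk).le
      rwa [Ideal.span_singleton_le_span_singleton] at this
    have h2 : a N ∣ a k := by
      obtain ⟨f, hf⟩ := h1
      refine ⟨ε f, ?_⟩
      have := congrArg ε hf
      simpa [hCdef, AddMonoidAlgebra.singleZeroRingHom, hε] using this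
    have h3 : a k ∣ a N := by
      clear h1 h2
      induction k, hk using Nat.le_induction with
      | base => exact dvd_rfl
      | succ n hn ih => exact dvd_trans (hdvd n) ih
    rw [ha k, ha N]
    exact le_antisymm (Ideal.span_singleton_le_span_singleton.2 h2)
      (Ideal.span_singleton_le_span_singleton.2 h3)
  · -- S satisfies ACCP
    intro s hs
    set g : ℕ → AddMonoidAlgebra D S := fun k => AddMonoidAlgebra.single (s k) (1 : D)
      with hgdef
    have hdvd : ∀ k, g (k+1) ∣ g k := by
      intro k
      obtain ⟨d, hd⟩ := hs k
      refine ⟨AddMonoidAlgebra.single d 1, ?_⟩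
      rw [hgdef]
      simp [AddMonoidAlgebra.single_mul_single, hd]
    obtain ⟨N, hN⟩ := h (fun k => Ideal.span {g k}) (fun k => ⟨⟨_, rfl⟩⟩)
      (fun k => (Ideal.span_singleton_le_span_singleton).2 (hdvd k))
    refine ⟨N, fun k hk => ?_⟩
    -- backward: s N = s k + e'
    have hback : ∃ e, s N = s k + e := by
      clear hN
      induction k, hk using Nat.le_induction with
      | base => exact ⟨0, by simp⟩
      | succ n hn ih =>
        obtain ⟨e, he⟩ := ih
        obtain ⟨d, hd⟩ := hs n
        exact ⟨d + e, by rw [he, hd, add_assoc]⟩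
    -- forward: s k = s N + e
    have hfwd : ∃ e, s k = s N + e := by
      have h1 : g N ∣ g k := by
        have := (hN k hk).le
        rwa [Ideal.span_singleton_le_span_singleton] at this
      obtain ⟨f, hf⟩ := h1
      have hmem : s k ∈ (g N * f).coeff.support := by
        rw [← hf, hgdef]
        simp [AddMonoidAlgebra.coeff_single, Finsupp.support_single_ne_zero _ (one_ne_zero : (1:D) ≠ 0)]
      have hsub := AddMonoidAlgebra.support_coeff_mul_subset (g N) f
      have := hsub hmem
      rw [hgdef] at this
      simp only [AddMonoidAlgebra.coeff_single, Finsupp.support_single_ne_zero _ (one_ne_zero : (1:D) ≠ 0)] at this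
      rw [Finset.mem_add] at this
      obtain ⟨b, hb, c, hc, hbc⟩ := this
      rw [Finset.mem_singleton] at hb
      exact ⟨c, by rw [← hbc, hb]⟩
    obtain ⟨e, he⟩ := hfwd
    obtain ⟨e', he'⟩ := hback
    ext x
    constructor
    · rintro ⟨d, rfl⟩
      exact ⟨e + d, by rw [he, add_assoc]⟩
    · rintro ⟨d, rfl⟩
      exact ⟨e' + d, by rw [he', add_assoc]⟩
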